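/- Let H be a Hopf *-algebra, B a right H-module *-algebra, and M a right H-equivariant B-*-bimodule. The set ZS¹_ℓ(H;B,M) of lazy Sweedler 1-cocycles — unitaries σ in the convolution algebra C(H,B) centralizing ρ_B(B)⊕ρ_M(M), with σ(1)=1 and σ(hk) = (σ(h)◁k₍₁₎)σ(k₍₂₎) for all h,k ∈ H — is a group under convolution. -/

import Mathlib

open TensorProduct

section ConvolutionFramework

variable {k : Type*} [CommRing k] [StarRing k]
variable {H : Type*} [Ring H] [HopfAlgebra k H] [StarRing H] [StarModule k H]
variable {B : Type*} [Ring B] [Algebra k B] [StarRing B] [StarModule k B]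
variable {M : Type*} [AddCommGroup M] [Module k M] [StarAddMonoid M] [StarModule k M]

/-- The convolution product on `C(H,B) = Hom_k(H,B)`:
`(f ⋆ g)(h) = f(h₍₁₎) g(h₍₂₎)`. -/
noncomputable def conv (f g : H →ₗ[k] B) : H →ₗ[k] B :=
  LinearMap.mul' k B ∘ₗ TensorProduct.map f g ∘ₗ Coalgebra.comul

/-- The convolution unit `ε(·) 1_B`. -/
noncomputable def convOne : H →ₗ[k] B :=
  Algebra.linearMap k B ∘ₗ Coalgebra.counit

/-- The involution on the convolution bimodule: `f*(h) = (f (S(h)*))*`. -/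
noncomputable def convStar (f : H →ₗ[k] M) : H →ₗ[k] M where
  toFun h := star (f (star (HopfAlgebra.antipode (R := k) h)))
  map_add' x y := by simp
  map_smul' r x := by simp [star_smul]

/-- The `star ⊗ star` map on `H ⊗ H` (as an additive map). -/
noncomputable def starTensor : H ⊗[k] H →+ H ⊗[k] H :=
  TensorProduct.liftAddHom
    { toFun := fun x =>
        { toFun := fun y => star x ⊗ₜ[k] star y
          map_zero' := by simp
          map_add' := fun y₁ y₂ => by simp [star_add, TensorProduct.tmul_add] }
      map_zero' := by ext y; simp
      map_add' := fun x₁ x₂ => by ext y; simp [star_add, TensorProduct.add_tmul] }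
    (fun r x y => by
      simp only [AddMonoidHom.coe_mk, ZeroHom.coe_mk, star_smul]
      rw [TensorProduct.smul_tmul])

/-- `H` is a Hopf `*`-algebra: `Δ(h*) = h₍₁₎* ⊗ h₍₂₎*`, `ε(h*) = ε(h)*`, and
`S ∘ * ∘ S ∘ * = id`. -/
def IsHopfStar (k H : Type*) [CommRing k] [StarRing k]
    [Ring H] [HopfAlgebra k H] [StarRing H] [StarModule k H] : Prop :=
  (∀ h : H, Coalgebra.comul (R := k) (star h) = starTensor (Coalgebra.comul (R := k) h)) ∧
  (∀ h : H, Coalgebra.counit (R := k) (star h) = star (Coalgebra.counit (R := k) h)) ∧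
  (∀ h : H, HopfAlgebra.antipode (R := k) (star (HopfAlgebra.antipode (R := k) (star h))) = h)

end ConvolutionFramework

section ModuleAlgebra

/-- A right `H`-module `*`-algebra `B`: a right action `act` of `H` on `B` such that the
multiplication and unit of `B` are `H`-linear in the Hopf sense and the action is
compatible with the `*`-structures. -/
structure RightHopfModuleStarAlgebra (k H B : Type*) [CommRing k] [StarRing k]
    [Ring H] [HopfAlgebra k H] [StarRing H] [StarModule k H]
    [Ring B] [Algebra k B] [StarRing B] [StarModule k B] where
  act : B →ₗ[k] H →ₗ[k] B
  act_one : ∀ b : B, act b 1 = b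
  act_mul : ∀ (b : B) (h h' : H), act b (h * h') = act (act b h) h'
  act_algebra_mul : ∀ b₁ b₂ : B,
    act (b₁ * b₂) = LinearMap.mul' k B ∘ₗ TensorProduct.map (act b₁) (act b₂) ∘ₗ Coalgebra.comul
  act_algebra_one : act 1 = Algebra.linearMap k B ∘ₗ Coalgebra.counit
  act_star : ∀ (b : B) (h : H),
    star (act b h) = act (star b) (star (HopfAlgebra.antipode (R := k) h))

/-- A right `H`-equivariant `B`-`*`-bimodule `M`: commuting left and right `B`-actions,
a right `H`-action, the `*`-structure compatibilities, and Hopf-equivariance of the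
`B`-actions. -/
structure EquivStarBimodule (k H B M : Type*) [CommRing k] [StarRing k]
    [Ring H] [HopfAlgebra k H] [StarRing H] [StarModule k H]
    [Ring B] [Algebra k B] [StarRing B] [StarModule k B]
    [AddCommGroup M] [Module k M] [StarAddMonoid M] [StarModule k M]
    (ρ : RightHopfModuleStarAlgebra k H B) where
  lact : B →ₗ[k] M →ₗ[k] M
  ract : M →ₗ[k] B →ₗ[k] M
  hact : M →ₗ[k] H →ₗ[k] M
  lact_one : ∀ m : M, lact 1 m = m
  lact_mul : ∀ (b₁ b₂ : B) (m : M), lact (b₁ * b₂) m = lact b₁ (lact b₂ m)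
  ract_one : ∀ m : M, ract m 1 = m
  ract_mul : ∀ (m : M) (b₁ b₂ : B), ract m (b₁ * b₂) = ract (ract m b₁) b₂
  middle : ∀ (b₁ : B) (m : M) (b₂ : B), ract (lact b₁ m) b₂ = lact b₁ (ract m b₂)
  star_compat : ∀ (b₁ : B) (m : M) (b₂ : B),
    star (lact b₁ (ract m b₂)) = lact (star b₂) (ract (star m) (star b₁))
  hact_one : ∀ m : M, hact m 1 = m
  hact_mul : ∀ (m : M) (h h' : H), hact m (h * h') = hact (hact m h) h'
  hact_lact : ∀ (b : B) (m : M), hact (lact b m) =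
    TensorProduct.lift lact ∘ₗ TensorProduct.map (ρ.act b) (hact m) ∘ₗ Coalgebra.comul
  hact_ract : ∀ (m : M) (b : B), hact (ract m b) =
    TensorProduct.lift ract ∘ₗ TensorProduct.map (hact m) (ρ.act b) ∘ₗ Coalgebra.comul
  hact_star : ∀ (m : M) (h : H),
    star (hact m h) = hact (star m) (star (HopfAlgebra.antipode (R := k) h))

variable {k H B M : Type*} [CommRing k] [StarRing k]
  [Ring H] [HopfAlgebra k H] [StarRing H] [StarModule k H]
  [Ring B] [Algebra k B] [StarRing B] [StarModule k B]
  [AddCommGroup M] [Module k M] [StarAddMonoid M] [StarModule k M]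
  {ρ : RightHopfModuleStarAlgebra k H B}

/-- The left convolution action of `C(H,B)` on `C(H,M)`: `(f ⋆ μ)(h) = f(h₍₁₎) • μ(h₍₂₎)`. -/
noncomputable def convL (S : EquivStarBimodule k H B M ρ)
    (f : H →ₗ[k] B) (μ : H →ₗ[k] M) : H →ₗ[k] M :=
  TensorProduct.lift S.lact ∘ₗ TensorProduct.map f μ ∘ₗ Coalgebra.comul

/-- The right convolution action of `C(H,B)` on `C(H,M)`: `(μ ⋆ f)(h) = μ(h₍₁₎) • f(h₍₂₎)`. -/
noncomputable def convR (S : EquivStarBimodule k H B M ρ)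
    (μ : H →ₗ[k] M) (f : H →ₗ[k] B) : H →ₗ[k] M :=
  TensorProduct.lift S.ract ∘ₗ TensorProduct.map μ f ∘ₗ Coalgebra.comul

/-- A lazy Sweedler 1-cocycle: a unitary `σ` of `C(H,B)` centralizing
`ρ_B(B) ⊕ ρ_M(M)`, with `σ(1) = 1` and `σ(hk) = (σ(h) ◁ k₍₁₎) σ(k₍₂₎)`. -/
noncomputable def IsLazySweedlerCocycle (S : EquivStarBimodule k H B M ρ)
    (σ : H →ₗ[k] B) : Prop :=
  conv σ (convStar σ) = convOne ∧
  conv (convStar σ) σ = convOne ∧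
  (∀ b : B, conv σ (ρ.act b) = conv (ρ.act b) σ) ∧
  (∀ m : M, convL S σ (S.hact m) = convR S (S.hact m) σ) ∧
  σ 1 = 1 ∧
  (∀ h : H, σ ∘ₗ LinearMap.mulLeft k h =
    LinearMap.mul' k B ∘ₗ TensorProduct.map (ρ.act (σ h)) σ ∘ₗ Coalgebra.comul)

/-- A lazy Hochschild 1-cocycle: a self-adjoint `μ ∈ C(H,M)` centralizing `ρ_B(B)`,
with `μ(1) = 0` and `μ(hk) = μ(h) ◁ k + ε(h) μ(k)`. -/
noncomputable def IsLazyHochschildCocycle (S : EquivStarBimodule k H B M ρ)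
    (μ : H →ₗ[k] M) : Prop :=
  convStar μ = μ ∧
  (∀ b : B, convL S (ρ.act b) μ = convR S μ (ρ.act b)) ∧
  μ 1 = 0 ∧
  (∀ h : H, μ ∘ₗ LinearMap.mulLeft k h = S.hact (μ h) + Coalgebra.counit (R := k) h • μ)

/-- `υ` is a unitary of `Cent_B(B ⊕ M)`: a unitary of `B` commuting with all of `B` and
centralizing `M`. -/
def IsCentralUnitary (S : EquivStarBimodule k H B M ρ) (υ : B) : Prop :=
  υ * star υ = 1 ∧ star υ * υ = 1 ∧ (∀ b : B, υ * b = b * υ) ∧ ∀ m : M, S.lact υ m = S.ract m υ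

/-- The Sweedler coboundary `Dυ(h) := (υ ◁ h) υ*`. -/
noncomputable def sweedlerCobound (ρ : RightHopfModuleStarAlgebra k H B) (υ : B) :
    H →ₗ[k] B :=
  LinearMap.mulRight k (star υ) ∘ₗ ρ.act υ

/-- The Hochschild coboundary `Dm(h) := m ◁ h - ε(h) m`. -/
noncomputable def hochCobound (S : EquivStarBimodule k H B M ρ) (m : M) : H →ₗ[k] M :=
  S.hact m - LinearMap.smulRight (Coalgebra.counit (R := k)) m

/-- An `H`-equivariant `*`-derivation `der : B → M`. -/
def IsEquivStarDerivation (S : EquivStarBimodule k H B M ρ) (der : B →ₗ[k] M) : Prop :=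
  (∀ b₁ b₂ : B, der (b₁ * b₂) = S.ract (der b₁) b₂ + S.lact b₁ (der b₂)) ∧
  (∀ b : B, der (star b) = - star (der b)) ∧
  (∀ (b : B) (h : H), der (ρ.act b h) = S.hact (der b) h)

/-- The Maurer–Cartan cocycle `MC[der](σ)(h) := -derσ(h₍₁₎) • σ*(h₍₂₎)`. -/
noncomputable def mcCocycle (S : EquivStarBimodule k H B M ρ) (der : B →ₗ[k] M)
    (σ : H →ₗ[k] B) : H →ₗ[k] M :=
  - (TensorProduct.lift S.ract ∘ₗ TensorProduct.map (der ∘ₗ σ) (convStar σ) ∘ₗ Coalgebra.comul)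

end ModuleAlgebra


set_option linter.unusedSectionVars false

namespace Stmt9Aux

variable {k : Type*} [CommRing k]
variable {H : Type*} [Ring H] [HopfAlgebra k H]
variable {A : Type*} [Ring A] [Algebra k A]

/-- generic convolution -/
noncomputable def aconv (f g : H →ₗ[k] A) : H →ₗ[k] A :=
  LinearMap.mul' k A ∘ₗ TensorProduct.map f g ∘ₗ Coalgebra.comul

noncomputable def aone : H →ₗ[k] A :=
  Algebra.linearMap k A ∘ₗ Coalgebra.counit

open Coalgebra

lemma sum_counit_smul {h : H} {ι : Type*} (r : Coalgebra.Repr k h ι) :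
    ∑ i ∈ r.index, counit (R := k) (r.left i) • r.right i = h := by
  have h1 : ∑ i ∈ r.index, counit (R := k) (r.left i) • r.right i
      = TensorProduct.lid k H (∑ i ∈ r.index, counit (R := k) (r.left i) ⊗ₜ[k] r.right i) := by
    rw [map_sum]; simp
  rw [h1, Coalgebra.sum_counit_tmul_eq r]; simp

lemma sum_smul_counit {h : H} {ι : Type*} (r : Coalgebra.Repr k h ι) :
    ∑ i ∈ r.index, counit (R := k) (r.right i) • r.left i = h := by
  have h1 : ∑ i ∈ r.index, counit (R := k) (r.right i) • r.left i
      = TensorProduct.rid k H (∑ i ∈ r.index, r.left i ⊗ₜ[k] counit (R := k) (r.right i)) := by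
    rw [map_sum]; simp
  rw [h1, Coalgebra.sum_tmul_counit_eq r]; simp

lemma coassoc_sum {X : Type*} [AddCommMonoid X] [Module k X]
    (Φ : H ⊗[k] (H ⊗[k] H) →ₗ[k] X) {h : H} {ι : Type*} (r : Coalgebra.Repr k h ι)
    {κ Λ : ι → Type*}
    (r₁ : (i : ι) → Coalgebra.Repr k (r.left i) (κ i))
    (r₂ : (i : ι) → Coalgebra.Repr k (r.right i) (Λ i)) :
    ∑ i ∈ r.index, ∑ j ∈ (r₁ i).index,
      Φ ((r₁ i).left j ⊗ₜ[k] ((r₁ i).right j ⊗ₜ[k] r.right i))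
    = ∑ i ∈ r.index, ∑ j ∈ (r₂ i).index,
      Φ (r.left i ⊗ₜ[k] ((r₂ i).left j ⊗ₜ[k] (r₂ i).right j)) := by
  have := Coalgebra.sum_tmul_tmul_eq r r₁ r₂
  apply_fun Φ at this
  simpa [map_sum] using this

lemma aconv_apply {h : H} {ι : Type*} (r : Coalgebra.Repr k h ι) (f g : H →ₗ[k] A) :
    aconv f g h = ∑ i ∈ r.index, f (r.left i) * g (r.right i) := by
  simp only [aconv, LinearMap.comp_apply, ← r.eq, map_sum, TensorProduct.map_tmul,
    LinearMap.mul'_apply]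

lemma aone_apply (h : H) : (aone : H →ₗ[k] A) h = algebraMap k A (counit (R := k) h) := rfl

lemma aconv_aone_left (f : H →ₗ[k] A) : aconv aone f = f := by
  ext h
  rw [aconv_apply (Coalgebra.Repr.arbitrary k h)]
  have : ∀ i ∈ (Coalgebra.Repr.arbitrary k h).index,
      (aone : H →ₗ[k] A) ((Coalgebra.Repr.arbitrary k h).left i) *
        f ((Coalgebra.Repr.arbitrary k h).right i) =
      f (counit (R := k) ((Coalgebra.Repr.arbitrary k h).left i) •
        (Coalgebra.Repr.arbitrary k h).right i) := by
    intro i _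
    rw [aone_apply, map_smul, ← Algebra.smul_def]
  rw [Finset.sum_congr rfl this, ← map_sum, sum_counit_smul]

lemma aconv_aone_right (f : H →ₗ[k] A) : aconv f aone = f := by
  ext h
  rw [aconv_apply (Coalgebra.Repr.arbitrary k h)]
  simp only [aone_apply]
  have : ∀ i ∈ (Coalgebra.Repr.arbitrary k h).index,
      f ((Coalgebra.Repr.arbitrary k h).left i) *
        algebraMap k A (counit (R := k) ((Coalgebra.Repr.arbitrary k h).right i)) =
      f (counit (R := k) ((Coalgebra.Repr.arbitrary k h).right i) •
        (Coalgebra.Repr.arbitrary k h).left i) := by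
    intro i _
    rw [map_smul, Algebra.algebraMap_eq_smul_one, mul_smul_comm, mul_one]
  rw [Finset.sum_congr rfl this, ← map_sum, sum_smul_counit]

lemma aconv_assoc (f g w : H →ₗ[k] A) : aconv (aconv f g) w = aconv f (aconv g w) := by
  ext h
  set r := Coalgebra.Repr.arbitrary k h
  set Φ : H ⊗[k] (H ⊗[k] H) →ₗ[k] A :=
    LinearMap.mul' k A ∘ₗ TensorProduct.map f
      (LinearMap.mul' k A ∘ₗ TensorProduct.map g w) with hΦ
  have hΦ' : ∀ x y z : H, Φ (x ⊗ₜ[k] (y ⊗ₜ[k] z)) = f x * (g y * w z) := by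
    intro x y z; simp [hΦ]
  calc aconv (aconv f g) w h
      = ∑ i ∈ r.index, (aconv f g) (r.left i) * w (r.right i) := aconv_apply r _ _
    _ = ∑ i ∈ r.index, ∑ j ∈ (Coalgebra.Repr.arbitrary k (r.left i)).index,
          Φ ((Coalgebra.Repr.arbitrary k (r.left i)).left j ⊗ₜ[k]
            ((Coalgebra.Repr.arbitrary k (r.left i)).right j ⊗ₜ[k] r.right i)) := by
        refine Finset.sum_congr rfl fun i _ => ?_
        rw [aconv_apply (Coalgebra.Repr.arbitrary k (r.left i)), Finset.sum_mul]
        exact Finset.sum_congr rfl fun j _ => by rw [hΦ', mul_assoc]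
    _ = ∑ i ∈ r.index, ∑ j ∈ (Coalgebra.Repr.arbitrary k (r.right i)).index,
          Φ (r.left i ⊗ₜ[k] ((Coalgebra.Repr.arbitrary k (r.right i)).left j ⊗ₜ[k]
            (Coalgebra.Repr.arbitrary k (r.right i)).right j)) :=
        coassoc_sum Φ r _ _
    _ = ∑ i ∈ r.index, f (r.left i) * (aconv g w) (r.right i) := by
        refine Finset.sum_congr rfl fun i _ => ?_
        rw [aconv_apply (Coalgebra.Repr.arbitrary k (r.right i)), Finset.mul_sum]
        exact Finset.sum_congr rfl fun j _ => by rw [hΦ']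
    _ = aconv f (aconv g w) h := (aconv_apply r _ _).symm


lemma aconv_add_left (f₁ f₂ g : H →ₗ[k] A) : aconv (f₁ + f₂) g = aconv f₁ g + aconv f₂ g := by
  simp [aconv, TensorProduct.map_add_left, LinearMap.comp_add, LinearMap.add_comp]

lemma aconv_add_right (f g₁ g₂ : H →ₗ[k] A) : aconv f (g₁ + g₂) = aconv f g₁ + aconv f g₂ := by
  simp [aconv, TensorProduct.map_add_right, LinearMap.comp_add, LinearMap.add_comp]

lemma aconv_smul_left (c : k) (f g : H →ₗ[k] A) : aconv (c • f) g = c • aconv f g := by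
  simp [aconv, TensorProduct.map_smul_left, LinearMap.comp_smul, LinearMap.smul_comp]

lemma aconv_smul_right (c : k) (f g : H →ₗ[k] A) : aconv f (c • g) = c • aconv f g := by
  simp [aconv, TensorProduct.map_smul_right, LinearMap.comp_smul, LinearMap.smul_comp]

/-- convolution as a bilinear map -/
noncomputable def aconvBil : (H →ₗ[k] A) →ₗ[k] (H →ₗ[k] A) →ₗ[k] (H →ₗ[k] A) where
  toFun f :=
    { toFun := fun g => aconv f g
      map_add' := fun g₁ g₂ => aconv_add_right f g₁ g₂
      map_smul' := fun c g => aconv_smul_right c f g }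
  map_add' f₁ f₂ := by ext g : 1; exact aconv_add_left f₁ f₂ g
  map_smul' c f := by ext g : 1; exact aconv_smul_left c f g

@[simp] lemma aconvBil_apply (f g : H →ₗ[k] A) : aconvBil f g = aconv f g := rfl

lemma aconv_sum_left {ι : Type*} (s : Finset ι) (f : ι → (H →ₗ[k] A)) (g : H →ₗ[k] A) :
    aconv (∑ i ∈ s, f i) g = ∑ i ∈ s, aconv (f i) g := by
  have h1 := map_sum (aconvBil.flip g) f s
  simp only [LinearMap.flip_apply, aconvBil_apply] at h1
  exact h1

lemma aconv_sum_right {ι : Type*} (s : Finset ι) (f : H →ₗ[k] A) (g : ι → (H →ₗ[k] A)) :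
    aconv f (∑ i ∈ s, g i) = ∑ i ∈ s, aconv f (g i) := by
  have h1 := map_sum (aconvBil f) g s
  simp only [aconvBil_apply] at h1
  exact h1

/-- a representation of `comul (a*b)` from representations of `a` and `b` -/
noncomputable def reprMul {a b : H} {ι ι' : Type*} (r : Coalgebra.Repr k a ι)
    (s : Coalgebra.Repr k b ι') :
    Coalgebra.Repr k (a * b) (ι × ι') where
  index := r.index ×ˢ s.index
  left := fun p => r.left p.1 * s.left p.2
  right := fun p => r.right p.1 * s.right p.2
  eq := by
    rw [Bialgebra.comul_mul, ← r.eq, ← s.eq, Finset.sum_mul_sum, Finset.sum_product]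
    simp [Algebra.TensorProduct.tmul_mul_tmul]

lemma aconv_mul_apply (f g : H →ₗ[k] A) {a b : H}
    {ι ι' : Type*} (r : Coalgebra.Repr k a ι) (s : Coalgebra.Repr k b ι') :
    aconv f g (a * b) = ∑ i ∈ r.index, ∑ j ∈ s.index,
      f (r.left i * s.left j) * g (r.right i * s.right j) := by
  rw [aconv_apply (reprMul r s), ← Finset.sum_product']
  rfl

lemma aconv_apply_one (f g : H →ₗ[k] A) : aconv f g 1 = f 1 * g 1 := by
  simp [aconv, Algebra.TensorProduct.one_def]

lemma aconv_mulLeft (f g : H →ₗ[k] A) {h : H} {ι : Type*} (r : Coalgebra.Repr k h ι) :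
    aconv f g ∘ₗ LinearMap.mulLeft k h = ∑ i ∈ r.index,
      aconv (f ∘ₗ LinearMap.mulLeft k (r.left i)) (g ∘ₗ LinearMap.mulLeft k (r.right i)) := by
  ext x
  rw [LinearMap.comp_apply, LinearMap.mulLeft_apply,
    aconv_mul_apply f g r (Coalgebra.Repr.arbitrary k x), LinearMap.sum_apply]
  refine Finset.sum_congr rfl fun i _ => ?_
  rw [aconv_apply (Coalgebra.Repr.arbitrary k x)]
  rfl

lemma aone_mulLeft (h : H) :
    (aone : H →ₗ[k] A) ∘ₗ LinearMap.mulLeft k h = Coalgebra.counit (R := k) h • aone := by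
  ext x
  simp [aone_apply, Algebra.algebraMap_eq_smul_one, mul_smul]

/-- `z ↦ τ ∘ₗ mulLeft z` as a linear map. -/
noncomputable def lmulComp (τ : H →ₗ[k] A) : H →ₗ[k] (H →ₗ[k] A) where
  toFun z := τ ∘ₗ LinearMap.mulLeft k z
  map_add' x y := by ext w; simp [add_mul]
  map_smul' c x := by ext w; simp [smul_mul_assoc]

@[simp] lemma lmulComp_apply (τ : H →ₗ[k] A) (z : H) :
    lmulComp τ z = τ ∘ₗ LinearMap.mulLeft k z := rfl

section Antipode

open HopfAlgebra

lemma antipode_one : antipode (R := k) (1 : H) = 1 := by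
  have := HopfAlgebra.mul_antipode_rTensor_comul_apply (R := k) (1 : H)
  simpa [Bialgebra.comul_one, Algebra.TensorProduct.one_def] using this

lemma counit_antipode (h : H) :
    Coalgebra.counit (R := k) (antipode (R := k) h) = Coalgebra.counit (R := k) h := by
  set r := Coalgebra.Repr.arbitrary k h
  have h1 := congrArg (Coalgebra.counit (R := k)) (HopfAlgebra.sum_antipode_mul_eq_algebraMap_counit r)
  rw [map_sum] at h1
  simp only [Bialgebra.counit_mul, Bialgebra.counit_algebraMap] at h1
  calc Coalgebra.counit (R := k) (antipode (R := k) h)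
      = Coalgebra.counit (R := k) (antipode (R := k)
          (∑ i ∈ r.index, Coalgebra.counit (R := k) (r.right i) • r.left i)) := by
        rw [sum_smul_counit]
    _ = ∑ i ∈ r.index, Coalgebra.counit (R := k) (antipode (R := k) (r.left i)) *
          Coalgebra.counit (R := k) (r.right i) := by
        rw [map_sum, map_sum]
        refine Finset.sum_congr rfl fun i _ => ?_
        rw [map_smul, map_smul, smul_eq_mul, mul_comm]
    _ = Coalgebra.counit (R := k) h := h1

lemma inner_step (a : H) {c : H} {ι : Type*} (s : Coalgebra.Repr k c ι) :
    ∑ j ∈ s.index, ((antipode (R := k) (s.left j)) ⊗ₜ[k] (antipode (R := k) a)) *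
        Coalgebra.comul (R := k) (s.right j)
      = (1 : H) ⊗ₜ[k] (antipode (R := k) a * c) := by
  set Ψ : H ⊗[k] (H ⊗[k] H) →ₗ[k] H ⊗[k] H :=
    TensorProduct.map (LinearMap.mul' k H ∘ₗ TensorProduct.map (antipode (R := k)) LinearMap.id)
        (LinearMap.mulLeft k (antipode (R := k) a)) ∘ₗ
      (TensorProduct.assoc k H H H).symm.toLinearMap with hΨ
  have hΨ' : ∀ p q₁ q₂ : H, Ψ (p ⊗ₜ[k] (q₁ ⊗ₜ[k] q₂)) =
      (antipode (R := k) p * q₁) ⊗ₜ[k] (antipode (R := k) a * q₂) := by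
    intro p q₁ q₂; simp [hΨ]
  calc ∑ j ∈ s.index, ((antipode (R := k) (s.left j)) ⊗ₜ[k] (antipode (R := k) a)) *
          Coalgebra.comul (R := k) (s.right j)
      = ∑ j ∈ s.index, ∑ l ∈ (Coalgebra.Repr.arbitrary k (s.right j)).index,
          Ψ (s.left j ⊗ₜ[k] ((Coalgebra.Repr.arbitrary k (s.right j)).left l ⊗ₜ[k]
            (Coalgebra.Repr.arbitrary k (s.right j)).right l)) := by
        refine Finset.sum_congr rfl fun j _ => ?_
        rw [← (Coalgebra.Repr.arbitrary k (s.right j)).eq, Finset.mul_sum]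
        refine Finset.sum_congr rfl fun l _ => ?_
        rw [hΨ', Algebra.TensorProduct.tmul_mul_tmul]
    _ = ∑ j ∈ s.index, ∑ l ∈ (Coalgebra.Repr.arbitrary k (s.left j)).index,
          Ψ ((Coalgebra.Repr.arbitrary k (s.left j)).left l ⊗ₜ[k]
            ((Coalgebra.Repr.arbitrary k (s.left j)).right l ⊗ₜ[k] s.right j)) :=
        (coassoc_sum Ψ s _ _).symm
    _ = ∑ j ∈ s.index, (algebraMap k H (Coalgebra.counit (R := k) (s.left j))) ⊗ₜ[k]
          (antipode (R := k) a * s.right j) := by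
        refine Finset.sum_congr rfl fun j _ => ?_
        rw [← HopfAlgebra.sum_antipode_mul_eq_algebraMap_counit (Coalgebra.Repr.arbitrary k (s.left j)),
          TensorProduct.sum_tmul]
        exact Finset.sum_congr rfl fun l _ => by rw [hΨ']
    _ = (1 : H) ⊗ₜ[k] (antipode (R := k) a *
          ∑ j ∈ s.index, Coalgebra.counit (R := k) (s.left j) • s.right j) := by
        rw [Finset.mul_sum, TensorProduct.tmul_sum]
        refine Finset.sum_congr rfl fun j _ => ?_
        rw [Algebra.algebraMap_eq_smul_one, TensorProduct.smul_tmul, mul_smul_comm]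
    _ = (1 : H) ⊗ₜ[k] (antipode (R := k) a * c) := by rw [sum_counit_smul]

/-- the antipode is an anti-coalgebra morphism (comultiplication part). -/
lemma comul_antipode (h : H) :
    Coalgebra.comul (R := k) (antipode (R := k) h) =
      TensorProduct.comm k H H (TensorProduct.map (antipode (R := k)) (antipode (R := k))
        (Coalgebra.comul (R := k) h)) := by
  have key : (Coalgebra.comul ∘ₗ antipode k : H →ₗ[k] H ⊗[k] H) =
      (TensorProduct.comm k H H).toLinearMap ∘ₗ
        TensorProduct.map (antipode (R := k)) (antipode (R := k)) ∘ₗ Coalgebra.comul := by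
    have hdp : aconv (Coalgebra.comul (R := k) (A := H)) (Coalgebra.comul ∘ₗ antipode k) = aone := by
      ext x
      set r := Coalgebra.Repr.arbitrary k x
      rw [aconv_apply r]
      have : ∀ i ∈ r.index,
          Coalgebra.comul (R := k) (r.left i) *
            (Coalgebra.comul ∘ₗ antipode (R := k)) (r.right i) =
          Coalgebra.comul (R := k) (r.left i * antipode (R := k) (r.right i)) := by
        intro i _; rw [Bialgebra.comul_mul]; rfl
      rw [Finset.sum_congr rfl this, ← map_sum, HopfAlgebra.sum_mul_antipode_eq_algebraMap_counit r,
        Bialgebra.comul_algebraMap]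
      rfl
    have hqd : aconv ((TensorProduct.comm k H H).toLinearMap ∘ₗ
        TensorProduct.map (antipode (R := k)) (antipode (R := k)) ∘ₗ Coalgebra.comul)
        (Coalgebra.comul (R := k) (A := H)) = aone := by
      ext x
      set r := Coalgebra.Repr.arbitrary k x with hr
      set Φ : H ⊗[k] (H ⊗[k] H) →ₗ[k] H ⊗[k] H :=
        LinearMap.mul' k (H ⊗[k] H) ∘ₗ
          TensorProduct.map
            ((TensorProduct.comm k H H).toLinearMap ∘ₗ
              TensorProduct.map (antipode (R := k)) (antipode (R := k)))
            (Coalgebra.comul (R := k)) ∘ₗ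
          (TensorProduct.assoc k H H H).symm.toLinearMap with hΦ
      have hΦ' : ∀ x y z : H, Φ (x ⊗ₜ[k] (y ⊗ₜ[k] z)) =
          (antipode (R := k) y ⊗ₜ[k] antipode (R := k) x) * Coalgebra.comul (R := k) z := by
        intro x y z; simp [hΦ]
      calc aconv ((TensorProduct.comm k H H).toLinearMap ∘ₗ
              TensorProduct.map (antipode (R := k)) (antipode (R := k)) ∘ₗ Coalgebra.comul)
              (Coalgebra.comul (R := k) (A := H)) x
          = ∑ i ∈ r.index, ∑ j ∈ (Coalgebra.Repr.arbitrary k (r.left i)).index,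
              Φ ((Coalgebra.Repr.arbitrary k (r.left i)).left j ⊗ₜ[k]
                ((Coalgebra.Repr.arbitrary k (r.left i)).right j ⊗ₜ[k] r.right i)) := by
            rw [aconv_apply r]
            refine Finset.sum_congr rfl fun i _ => ?_
            rw [LinearMap.comp_apply, LinearMap.comp_apply,
              ← (Coalgebra.Repr.arbitrary k (r.left i)).eq, map_sum, map_sum, Finset.sum_mul]
            exact Finset.sum_congr rfl fun j _ => by rw [hΦ']; rfl
        _ = ∑ i ∈ r.index, ∑ j ∈ (Coalgebra.Repr.arbitrary k (r.right i)).index,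
              Φ (r.left i ⊗ₜ[k] ((Coalgebra.Repr.arbitrary k (r.right i)).left j ⊗ₜ[k]
                (Coalgebra.Repr.arbitrary k (r.right i)).right j)) := coassoc_sum Φ r _ _
        _ = ∑ i ∈ r.index, (1 : H) ⊗ₜ[k] (antipode (R := k) (r.left i) * r.right i) := by
            refine Finset.sum_congr rfl fun i _ => ?_
            rw [← inner_step (r.left i) (Coalgebra.Repr.arbitrary k (r.right i))]
            exact Finset.sum_congr rfl fun j _ => by rw [hΦ']
        _ = aone x := by
            rw [← TensorProduct.tmul_sum, HopfAlgebra.sum_antipode_mul_eq_algebraMap_counit r, aone_apply]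
            simp [Algebra.TensorProduct.algebraMap_apply, Algebra.algebraMap_eq_smul_one,
              TensorProduct.smul_tmul, Algebra.TensorProduct.one_def]
    calc (Coalgebra.comul ∘ₗ antipode k : H →ₗ[k] H ⊗[k] H)
        = aconv aone (Coalgebra.comul ∘ₗ antipode k) := (aconv_aone_left _).symm
      _ = aconv (aconv ((TensorProduct.comm k H H).toLinearMap ∘ₗ
            TensorProduct.map (antipode (R := k)) (antipode (R := k)) ∘ₗ Coalgebra.comul)
            (Coalgebra.comul (R := k) (A := H))) (Coalgebra.comul ∘ₗ antipode k) := by rw [hqd]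
      _ = aconv ((TensorProduct.comm k H H).toLinearMap ∘ₗ
            TensorProduct.map (antipode (R := k)) (antipode (R := k)) ∘ₗ Coalgebra.comul)
            (aconv (Coalgebra.comul (R := k) (A := H)) (Coalgebra.comul ∘ₗ antipode k)) :=
          aconv_assoc _ _ _
      _ = aconv ((TensorProduct.comm k H H).toLinearMap ∘ₗ
            TensorProduct.map (antipode (R := k)) (antipode (R := k)) ∘ₗ Coalgebra.comul)
            aone := by rw [hdp]
      _ = _ := aconv_aone_right _
  simpa using LinearMap.congr_fun key h

end Antipode

section Star

variable {k : Type*} [CommRing k] [StarRing k]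
variable {H : Type*} [Ring H] [HopfAlgebra k H] [StarRing H] [StarModule k H]
variable {B : Type*} [Ring B] [Algebra k B] [StarRing B] [StarModule k B]
variable {M : Type*} [AddCommGroup M] [Module k M] [StarAddMonoid M] [StarModule k M]

lemma conv_eq_aconv (f g : H →ₗ[k] B) : conv f g = aconv f g := rfl

lemma convOne_eq_aone : (convOne : H →ₗ[k] B) = aone := rfl

lemma convStar_apply (f : H →ₗ[k] M) (h : H) :
    convStar f h = star (f (star (HopfAlgebra.antipode (R := k) h))) := rfl

lemma starTensor_tmul (x y : H) :
    starTensor (k := k) (x ⊗ₜ[k] y) = star x ⊗ₜ[k] star y := by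
  simp [starTensor]

lemma star_antipode_star_antipode (hH : IsHopfStar k H) (h : H) :
    star (HopfAlgebra.antipode (R := k) (star (HopfAlgebra.antipode (R := k) h))) = h := by
  have h1 := hH.2.2 (star h)
  rw [star_star] at h1
  rw [h1, star_star]

lemma convStar_convStar (hH : IsHopfStar k H) (f : H →ₗ[k] M) : convStar (convStar f) = f := by
  ext h
  rw [convStar_apply, convStar_apply, star_star, star_antipode_star_antipode hH]

/-- a representation of `comul (star (antipode h))` -/
noncomputable def reprStarAntipode (hH : IsHopfStar k H) {h : H} {ι : Type*} (r : Coalgebra.Repr k h ι) :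
    Coalgebra.Repr k (star (HopfAlgebra.antipode (R := k) h)) ι where
  index := r.index
  left := fun i => star (HopfAlgebra.antipode (R := k) (r.right i))
  right := fun i => star (HopfAlgebra.antipode (R := k) (r.left i))
  eq := by
    rw [hH.1, comul_antipode, ← r.eq, map_sum, map_sum]
    simp [starTensor_tmul]

lemma convStar_conv (hH : IsHopfStar k H) (f g : H →ₗ[k] B) :
    convStar (conv f g) = conv (convStar g) (convStar f) := by
  ext h
  set r := Coalgebra.Repr.arbitrary k h
  rw [convStar_apply, conv_eq_aconv, conv_eq_aconv, aconv_apply (reprStarAntipode hH r),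
    aconv_apply r, star_sum]
  refine Finset.sum_congr rfl fun i _ => ?_
  rw [star_mul]
  rfl

lemma convStar_convOne (hH : IsHopfStar k H) : convStar (convOne : H →ₗ[k] B) = convOne := by
  ext h
  rw [convStar_apply]
  show star (algebraMap k B (Coalgebra.counit (R := k)
    (star (HopfAlgebra.antipode (R := k) h)))) = algebraMap k B (Coalgebra.counit (R := k) h)
  rw [hH.2.1, counit_antipode]
  simp [Algebra.algebraMap_eq_smul_one, star_smul]

end Star

section Bimod

variable {k : Type*} [CommRing k] [StarRing k]
variable {H : Type*} [Ring H] [HopfAlgebra k H] [StarRing H] [StarModule k H]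
variable {B : Type*} [Ring B] [Algebra k B] [StarRing B] [StarModule k B]
variable {M : Type*} [AddCommGroup M] [Module k M] [StarAddMonoid M] [StarModule k M]
variable {ρ : RightHopfModuleStarAlgebra k H B} (SB : EquivStarBimodule k H B M ρ)

lemma act_conv (b₁ b₂ : B) : ρ.act (b₁ * b₂) = aconv (ρ.act b₁) (ρ.act b₂) :=
  ρ.act_algebra_mul b₁ b₂

lemma act_one_eq : ρ.act (1 : B) = (aone : H →ₗ[k] B) := ρ.act_algebra_one

lemma convL_apply (f : H →ₗ[k] B) (μ : H →ₗ[k] M) {h : H} {ι : Type*} (r : Coalgebra.Repr k h ι) :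
    convL SB f μ h = ∑ i ∈ r.index, SB.lact (f (r.left i)) (μ (r.right i)) := by
  simp only [convL, LinearMap.comp_apply, ← r.eq, map_sum, TensorProduct.map_tmul,
    TensorProduct.lift.tmul]

lemma convR_apply (f : H →ₗ[k] B) (μ : H →ₗ[k] M) {h : H} {ι : Type*} (r : Coalgebra.Repr k h ι) :
    convR SB μ f h = ∑ i ∈ r.index, SB.ract (μ (r.left i)) (f (r.right i)) := by
  simp only [convR, LinearMap.comp_apply, ← r.eq, map_sum, TensorProduct.map_tmul,
    TensorProduct.lift.tmul]

lemma convL_one (μ : H →ₗ[k] M) : convL SB convOne μ = μ := by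
  ext h
  rw [convL_apply SB _ _ (Coalgebra.Repr.arbitrary k h)]
  have : ∀ i ∈ (Coalgebra.Repr.arbitrary k h).index,
      SB.lact ((convOne : H →ₗ[k] B) ((Coalgebra.Repr.arbitrary k h).left i))
        (μ ((Coalgebra.Repr.arbitrary k h).right i)) =
      μ (Coalgebra.counit (R := k) ((Coalgebra.Repr.arbitrary k h).left i) •
        (Coalgebra.Repr.arbitrary k h).right i) := by
    intro i _
    show SB.lact (algebraMap k B _) _ = _
    rw [Algebra.algebraMap_eq_smul_one, map_smul, LinearMap.smul_apply, SB.lact_one, map_smul]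
  rw [Finset.sum_congr rfl this, ← map_sum, sum_counit_smul]

lemma convR_one (μ : H →ₗ[k] M) : convR SB μ convOne = μ := by
  ext h
  rw [convR_apply SB _ _ (Coalgebra.Repr.arbitrary k h)]
  have : ∀ i ∈ (Coalgebra.Repr.arbitrary k h).index,
      SB.ract (μ ((Coalgebra.Repr.arbitrary k h).left i))
        ((convOne : H →ₗ[k] B) ((Coalgebra.Repr.arbitrary k h).right i)) =
      μ (Coalgebra.counit (R := k) ((Coalgebra.Repr.arbitrary k h).right i) •
        (Coalgebra.Repr.arbitrary k h).left i) := by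
    intro i _
    show SB.ract _ (algebraMap k B _) = _
    rw [Algebra.algebraMap_eq_smul_one, map_smul, SB.ract_one, map_smul]
  rw [Finset.sum_congr rfl this, ← map_sum, sum_smul_counit]

lemma convL_conv (f g : H →ₗ[k] B) (μ : H →ₗ[k] M) :
    convL SB (conv f g) μ = convL SB f (convL SB g μ) := by
  ext h
  set r := Coalgebra.Repr.arbitrary k h
  set Φ : H ⊗[k] (H ⊗[k] H) →ₗ[k] M :=
    TensorProduct.lift SB.lact ∘ₗ TensorProduct.map f
      (TensorProduct.lift SB.lact ∘ₗ TensorProduct.map g μ) with hΦ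
  have hΦ' : ∀ x y z : H, Φ (x ⊗ₜ[k] (y ⊗ₜ[k] z)) =
      SB.lact (f x) (SB.lact (g y) (μ z)) := by
    intro x y z; simp [hΦ]
  calc convL SB (conv f g) μ h
      = ∑ i ∈ r.index, ∑ j ∈ (Coalgebra.Repr.arbitrary k (r.left i)).index,
          Φ ((Coalgebra.Repr.arbitrary k (r.left i)).left j ⊗ₜ[k]
            ((Coalgebra.Repr.arbitrary k (r.left i)).right j ⊗ₜ[k] r.right i)) := by
        rw [convL_apply SB _ _ r]
        refine Finset.sum_congr rfl fun i _ => ?_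
        rw [conv_eq_aconv, aconv_apply (Coalgebra.Repr.arbitrary k (r.left i)), map_sum,
          LinearMap.sum_apply]
        refine Finset.sum_congr rfl fun j _ => ?_
        rw [hΦ', SB.lact_mul]
    _ = ∑ i ∈ r.index, ∑ j ∈ (Coalgebra.Repr.arbitrary k (r.right i)).index,
          Φ (r.left i ⊗ₜ[k] ((Coalgebra.Repr.arbitrary k (r.right i)).left j ⊗ₜ[k]
            (Coalgebra.Repr.arbitrary k (r.right i)).right j)) := coassoc_sum Φ r _ _
    _ = convL SB f (convL SB g μ) h := by
        rw [convL_apply SB _ _ r]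
        refine Finset.sum_congr rfl fun i _ => ?_
        rw [convL_apply SB _ _ (Coalgebra.Repr.arbitrary k (r.right i)), map_sum]
        exact Finset.sum_congr rfl fun j _ => by rw [hΦ']

lemma convR_conv (f g : H →ₗ[k] B) (μ : H →ₗ[k] M) :
    convR SB μ (conv f g) = convR SB (convR SB μ f) g := by
  ext h
  set r := Coalgebra.Repr.arbitrary k h
  set Φ : H ⊗[k] (H ⊗[k] H) →ₗ[k] M :=
    TensorProduct.lift SB.ract ∘ₗ TensorProduct.map
      (TensorProduct.lift SB.ract ∘ₗ TensorProduct.map μ f) g ∘ₗ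
      (TensorProduct.assoc k H H H).symm.toLinearMap with hΦ
  have hΦ' : ∀ x y z : H, Φ (x ⊗ₜ[k] (y ⊗ₜ[k] z)) =
      SB.ract (SB.ract (μ x) (f y)) (g z) := by
    intro x y z; simp [hΦ]
  calc convR SB μ (conv f g) h
      = ∑ i ∈ r.index, ∑ j ∈ (Coalgebra.Repr.arbitrary k (r.right i)).index,
          Φ (r.left i ⊗ₜ[k] ((Coalgebra.Repr.arbitrary k (r.right i)).left j ⊗ₜ[k]
            (Coalgebra.Repr.arbitrary k (r.right i)).right j)) := by
        rw [convR_apply SB _ _ r]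
        refine Finset.sum_congr rfl fun i _ => ?_
        rw [conv_eq_aconv, aconv_apply (Coalgebra.Repr.arbitrary k (r.right i)), map_sum]
        refine Finset.sum_congr rfl fun j _ => ?_
        rw [hΦ', SB.ract_mul]
    _ = ∑ i ∈ r.index, ∑ j ∈ (Coalgebra.Repr.arbitrary k (r.left i)).index,
          Φ ((Coalgebra.Repr.arbitrary k (r.left i)).left j ⊗ₜ[k]
            ((Coalgebra.Repr.arbitrary k (r.left i)).right j ⊗ₜ[k] r.right i)) :=
        (coassoc_sum Φ r _ _).symm
    _ = convR SB (convR SB μ f) g h := by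
        rw [convR_apply SB _ _ r]
        refine Finset.sum_congr rfl fun i _ => ?_
        rw [convR_apply SB _ _ (Coalgebra.Repr.arbitrary k (r.left i)), map_sum,
          LinearMap.sum_apply]
        exact Finset.sum_congr rfl fun j _ => by rw [hΦ']

lemma convL_convR (f g : H →ₗ[k] B) (μ : H →ₗ[k] M) :
    convR SB (convL SB f μ) g = convL SB f (convR SB μ g) := by
  ext h
  set r := Coalgebra.Repr.arbitrary k h
  set Φ : H ⊗[k] (H ⊗[k] H) →ₗ[k] M :=
    TensorProduct.lift SB.lact ∘ₗ TensorProduct.map f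
      (TensorProduct.lift SB.ract ∘ₗ TensorProduct.map μ g) with hΦ
  have hΦ' : ∀ x y z : H, Φ (x ⊗ₜ[k] (y ⊗ₜ[k] z)) =
      SB.lact (f x) (SB.ract (μ y) (g z)) := by
    intro x y z; simp [hΦ]
  calc convR SB (convL SB f μ) g h
      = ∑ i ∈ r.index, ∑ j ∈ (Coalgebra.Repr.arbitrary k (r.left i)).index,
          Φ ((Coalgebra.Repr.arbitrary k (r.left i)).left j ⊗ₜ[k]
            ((Coalgebra.Repr.arbitrary k (r.left i)).right j ⊗ₜ[k] r.right i)) := by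
        rw [convR_apply SB _ _ r]
        refine Finset.sum_congr rfl fun i _ => ?_
        rw [convL_apply SB _ _ (Coalgebra.Repr.arbitrary k (r.left i)), map_sum,
          LinearMap.sum_apply]
        refine Finset.sum_congr rfl fun j _ => ?_
        rw [hΦ', SB.middle]
    _ = ∑ i ∈ r.index, ∑ j ∈ (Coalgebra.Repr.arbitrary k (r.right i)).index,
          Φ (r.left i ⊗ₜ[k] ((Coalgebra.Repr.arbitrary k (r.right i)).left j ⊗ₜ[k]
            (Coalgebra.Repr.arbitrary k (r.right i)).right j)) := coassoc_sum Φ r _ _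
    _ = convL SB f (convR SB μ g) h := by
        rw [convL_apply SB _ _ r]
        refine Finset.sum_congr rfl fun i _ => ?_
        rw [convR_apply SB _ _ (Coalgebra.Repr.arbitrary k (r.right i)), map_sum]
        exact Finset.sum_congr rfl fun j _ => by rw [hΦ']

lemma stepA (σ τ : H →ₗ[k] B)
    (hστ : aconv σ τ = aone) (hτσ : aconv τ σ = aone)
    (hσ6 : ∀ z : H, σ ∘ₗ LinearMap.mulLeft k z = aconv (ρ.act (σ z)) σ) (h : H) :
    aconv (ρ.act (τ h)) τ = aconv σ (aconv (τ ∘ₗ LinearMap.mulLeft k h) τ) := by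
  set r := Coalgebra.Repr.arbitrary k h with hr
  set A₃ : H →ₗ[k] (H →ₗ[k] B) :=
    aconvBil σ ∘ₗ (aconvBil.flip τ) ∘ₗ lmulComp τ with hA₃
  have hA₃' : ∀ z : H, A₃ z = aconv σ (aconv (τ ∘ₗ LinearMap.mulLeft k z) τ) := by
    intro z; simp [hA₃]
  set Φ : H ⊗[k] (H ⊗[k] H) →ₗ[k] (H →ₗ[k] B) :=
    TensorProduct.lift aconvBil ∘ₗ TensorProduct.map (ρ.act ∘ₗ τ)
      (TensorProduct.lift aconvBil ∘ₗ TensorProduct.map (ρ.act ∘ₗ σ) A₃) with hΦ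
  have hΦ' : ∀ x y z : H, Φ (x ⊗ₜ[k] (y ⊗ₜ[k] z)) =
      aconv (ρ.act (τ x)) (aconv (ρ.act (σ y))
        (aconv σ (aconv (τ ∘ₗ LinearMap.mulLeft k z) τ))) := by
    intro x y z; simp [hΦ, hA₃']
  calc aconv (ρ.act (τ h)) τ
      = ∑ i ∈ r.index, Coalgebra.counit (R := k) (r.right i) •
          aconv (ρ.act (τ (r.left i))) τ := by
        conv_lhs => rw [← sum_smul_counit r]
        rw [map_sum, map_sum, aconv_sum_left]
        refine Finset.sum_congr rfl fun i _ => ?_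
        rw [map_smul, map_smul, aconv_smul_left]
    _ = ∑ i ∈ r.index, aconv (ρ.act (τ (r.left i)))
          (aconv ((aconv σ τ) ∘ₗ LinearMap.mulLeft k (r.right i)) τ) := by
        refine Finset.sum_congr rfl fun i _ => ?_
        rw [hστ, aone_mulLeft, aconv_smul_left, aconv_aone_left, aconv_smul_right]
    _ = ∑ i ∈ r.index, ∑ j ∈ (Coalgebra.Repr.arbitrary k (r.right i)).index,
          Φ (r.left i ⊗ₜ[k] ((Coalgebra.Repr.arbitrary k (r.right i)).left j ⊗ₜ[k]
            (Coalgebra.Repr.arbitrary k (r.right i)).right j)) := by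
        refine Finset.sum_congr rfl fun i _ => ?_
        rw [aconv_mulLeft σ τ (Coalgebra.Repr.arbitrary k (r.right i)), aconv_sum_left,
          aconv_sum_right]
        refine Finset.sum_congr rfl fun j _ => ?_
        rw [hΦ', hσ6, aconv_assoc, aconv_assoc]
    _ = ∑ i ∈ r.index, ∑ j ∈ (Coalgebra.Repr.arbitrary k (r.left i)).index,
          Φ ((Coalgebra.Repr.arbitrary k (r.left i)).left j ⊗ₜ[k]
            ((Coalgebra.Repr.arbitrary k (r.left i)).right j ⊗ₜ[k] r.right i)) :=
        (coassoc_sum Φ r _ _).symm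
    _ = ∑ i ∈ r.index, Coalgebra.counit (R := k) (r.left i) • A₃ (r.right i) := by
        refine Finset.sum_congr rfl fun i _ => ?_
        have step1 : ∀ j ∈ (Coalgebra.Repr.arbitrary k (r.left i)).index,
            Φ ((Coalgebra.Repr.arbitrary k (r.left i)).left j ⊗ₜ[k]
              ((Coalgebra.Repr.arbitrary k (r.left i)).right j ⊗ₜ[k] r.right i)) =
            aconv (ρ.act (τ ((Coalgebra.Repr.arbitrary k (r.left i)).left j) *
              σ ((Coalgebra.Repr.arbitrary k (r.left i)).right j))) (A₃ (r.right i)) := by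
          intro j _
          rw [hΦ', ← hA₃', ← aconv_assoc, act_conv]
        rw [Finset.sum_congr rfl step1, ← aconv_sum_left, ← map_sum,
          ← aconv_apply (Coalgebra.Repr.arbitrary k (r.left i)) τ σ, hτσ, aone_apply,
          Algebra.algebraMap_eq_smul_one, map_smul, act_one_eq, aconv_smul_left,
          aconv_aone_left]
    _ = A₃ h := by
        have step : ∀ i ∈ r.index, Coalgebra.counit (R := k) (r.left i) • A₃ (r.right i) =
            A₃ (Coalgebra.counit (R := k) (r.left i) • r.right i) :=
          fun i _ => (map_smul A₃ _ _).symm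
        rw [Finset.sum_congr rfl step, ← map_sum, sum_counit_smul]
    _ = aconv σ (aconv (τ ∘ₗ LinearMap.mulLeft k h) τ) := hA₃' h

lemma inv_cocycle (σ τ : H →ₗ[k] B)
    (hστ : aconv σ τ = aone) (hτσ : aconv τ σ = aone)
    (hσ6 : ∀ z : H, σ ∘ₗ LinearMap.mulLeft k z = aconv (ρ.act (σ z)) σ)
    (hlazy : ∀ b : B, aconv τ (ρ.act b) = aconv (ρ.act b) τ) (h : H) :
    τ ∘ₗ LinearMap.mulLeft k h = aconv (ρ.act (τ h)) τ := by
  have hA := stepA (ρ := ρ) σ τ hστ hτσ hσ6 h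
  have key : aconv τ (aconv (aconv (ρ.act (τ h)) τ) σ) = τ ∘ₗ LinearMap.mulLeft k h := by
    rw [hA]
    calc aconv τ (aconv (aconv σ (aconv (τ ∘ₗ LinearMap.mulLeft k h) τ)) σ)
        = aconv (aconv τ σ) (aconv (τ ∘ₗ LinearMap.mulLeft k h) (aconv τ σ)) := by
          rw [aconv_assoc, aconv_assoc, ← aconv_assoc τ σ]
      _ = τ ∘ₗ LinearMap.mulLeft k h := by
          rw [hτσ, aconv_aone_left, aconv_aone_right]
  calc τ ∘ₗ LinearMap.mulLeft k h
      = aconv τ (aconv (aconv (ρ.act (τ h)) τ) σ) := key.symm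
    _ = aconv τ (aconv (ρ.act (τ h)) (aconv τ σ)) := by rw [aconv_assoc]
    _ = aconv τ (ρ.act (τ h)) := by rw [hτσ, aconv_aone_right]
    _ = aconv (ρ.act (τ h)) τ := hlazy _

end Bimod

end Stmt9Aux


open Stmt9Aux in
/-- Let `H` be a Hopf `*`-algebra, `B` a right `H`-module `*`-algebra, and
`M` a right `H`-equivariant `B`-`*`-bimodule.  The set of lazy Sweedler 1-cocycles —
unitaries `σ` of the convolution algebra `C(H,B)` centralizing `ρ_B(B) ⊕ ρ_M(M)`, with
`σ(1) = 1` and `σ(hk) = (σ(h) ◁ k₍₁₎) σ(k₍₂₎)` — is a group under convolution. -/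
theorem stmt9 {H B M : Type*}
    [Ring H] [HopfAlgebra ℂ H] [StarRing H] [StarModule ℂ H]
    [Ring B] [Algebra ℂ B] [StarRing B] [StarModule ℂ B]
    [AddCommGroup M] [Module ℂ M] [StarAddMonoid M] [StarModule ℂ M]
    (hH : IsHopfStar ℂ H)
    (ρ : RightHopfModuleStarAlgebra ℂ H B)
    (S : EquivStarBimodule ℂ H B M ρ) :
    IsLazySweedlerCocycle S convOne ∧
    (∀ σ τ : H →ₗ[ℂ] B, IsLazySweedlerCocycle S σ → IsLazySweedlerCocycle S τ →
      IsLazySweedlerCocycle S (conv σ τ)) ∧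
    (∀ σ τ υ : H →ₗ[ℂ] B, IsLazySweedlerCocycle S σ → IsLazySweedlerCocycle S τ →
      IsLazySweedlerCocycle S υ → conv (conv σ τ) υ = conv σ (conv τ υ)) ∧
    (∀ σ : H →ₗ[ℂ] B, IsLazySweedlerCocycle S σ →
      ∃ τ : H →ₗ[ℂ] B, IsLazySweedlerCocycle S τ ∧
        conv σ τ = convOne ∧ conv τ σ = convOne) := by
  have ce : ∀ f g : H →ₗ[ℂ] B, conv f g = aconv f g := fun _ _ => rfl
  have oe : (convOne : H →ₗ[ℂ] B) = aone := rfl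
  have cassoc : ∀ f g w : H →ₗ[ℂ] B, conv (conv f g) w = conv f (conv g w) :=
    fun f g w => aconv_assoc f g w
  have c1l : ∀ f : H →ₗ[ℂ] B, conv convOne f = f := fun f => aconv_aone_left f
  have c1r : ∀ f : H →ₗ[ℂ] B, conv f convOne = f := fun f => aconv_aone_right f
  refine ⟨?_, ?_, fun σ τ υ _ _ _ => cassoc σ τ υ, ?_⟩
  · -- convOne is a cocycle
    refine ⟨?_, ?_, fun b => ?_, fun m => ?_, ?_, fun h => ?_⟩
    · rw [convStar_convOne hH]; exact c1l convOne
    · rw [convStar_convOne hH]; exact c1l convOne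
    · rw [c1l, c1r]
    · rw [convL_one, convR_one]
    · show algebraMap ℂ B (Coalgebra.counit (R := ℂ) (1 : H)) = 1
      rw [Bialgebra.counit_one, map_one]
    · show (convOne : H →ₗ[ℂ] B) ∘ₗ LinearMap.mulLeft ℂ h =
        conv (ρ.act ((convOne : H →ₗ[ℂ] B) h)) convOne
      rw [c1r]
      have hact1 : ρ.act ((convOne : H →ₗ[ℂ] B) h) =
          Coalgebra.counit (R := ℂ) h • (convOne : H →ₗ[ℂ] B) := by
        show ρ.act (algebraMap ℂ B (Coalgebra.counit (R := ℂ) h)) = _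
        rw [Algebra.algebraMap_eq_smul_one, map_smul, act_one_eq]; rfl
      rw [hact1]
      exact aone_mulLeft h
  · -- product of cocycles
    rintro σ τ ⟨hσ1, hσ2, hσ3, hσ4, hσ5, hσ6⟩ ⟨hτ1, hτ2, hτ3, hτ4, hτ5, hτ6⟩
    have hσ1' : aconv σ (convStar σ) = aone := hσ1
    have hσ2' : aconv (convStar σ) σ = aone := hσ2
    have hτ1' : aconv τ (convStar τ) = aone := hτ1
    have hτ2' : aconv (convStar τ) τ = aone := hτ2
    have hσ3' : ∀ b : B, aconv σ (ρ.act b) = aconv (ρ.act b) σ := fun b => hσ3 b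
    have hτ3' : ∀ b : B, aconv τ (ρ.act b) = aconv (ρ.act b) τ := fun b => hτ3 b
    have hσ6' : ∀ z : H, σ ∘ₗ LinearMap.mulLeft ℂ z = aconv (ρ.act (σ z)) σ :=
      fun z => hσ6 z
    have hτ6' : ∀ z : H, τ ∘ₗ LinearMap.mulLeft ℂ z = aconv (ρ.act (τ z)) τ :=
      fun z => hτ6 z
    refine ⟨?_, ?_, fun b => ?_, fun m => ?_, ?_, fun h => ?_⟩
    · rw [convStar_conv hH]
      show aconv (aconv σ τ) (aconv (convStar τ) (convStar σ)) = aone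
      rw [aconv_assoc, ← aconv_assoc τ, hτ1', aconv_aone_left, hσ1']
    · rw [convStar_conv hH]
      show aconv (aconv (convStar τ) (convStar σ)) (aconv σ τ) = aone
      rw [aconv_assoc, ← aconv_assoc (convStar σ), hσ2', aconv_aone_left, hτ2']
    · show aconv (aconv σ τ) (ρ.act b) = aconv (ρ.act b) (aconv σ τ)
      rw [aconv_assoc, hτ3', ← aconv_assoc, hσ3', aconv_assoc]
    · calc convL S (conv σ τ) (S.hact m)
          = convL S σ (convR S (S.hact m) τ) := by rw [convL_conv, hτ4]
        _ = convR S (convL S σ (S.hact m)) τ := (convL_convR S σ τ (S.hact m)).symm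
        _ = convR S (convR S (S.hact m) σ) τ := by rw [hσ4]
        _ = convR S (S.hact m) (conv σ τ) := (convR_conv S σ τ (S.hact m)).symm
    · show aconv σ τ 1 = 1
      rw [aconv_apply_one, hσ5, hτ5, one_mul]
    · show (aconv σ τ) ∘ₗ LinearMap.mulLeft ℂ h =
        aconv (ρ.act (aconv σ τ h)) (aconv σ τ)
      set r := Coalgebra.Repr.arbitrary ℂ h with hr
      calc (aconv σ τ) ∘ₗ LinearMap.mulLeft ℂ h
          = ∑ i ∈ r.index, aconv (σ ∘ₗ LinearMap.mulLeft ℂ (r.left i))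
              (τ ∘ₗ LinearMap.mulLeft ℂ (r.right i)) := aconv_mulLeft σ τ r
        _ = ∑ i ∈ r.index, aconv (ρ.act (σ (r.left i) * τ (r.right i))) (aconv σ τ) := by
            refine Finset.sum_congr rfl fun i _ => ?_
            rw [hσ6', hτ6']
            calc aconv (aconv (ρ.act (σ (r.left i))) σ) (aconv (ρ.act (τ (r.right i))) τ)
                = aconv (ρ.act (σ (r.left i)))
                    (aconv (aconv σ (ρ.act (τ (r.right i)))) τ) := by
                  rw [aconv_assoc, ← aconv_assoc σ]
              _ = aconv (ρ.act (σ (r.left i)))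
                    (aconv (ρ.act (τ (r.right i))) (aconv σ τ)) := by
                  rw [hσ3', aconv_assoc]
              _ = aconv (aconv (ρ.act (σ (r.left i))) (ρ.act (τ (r.right i))))
                    (aconv σ τ) := (aconv_assoc _ _ _).symm
              _ = aconv (ρ.act (σ (r.left i) * τ (r.right i))) (aconv σ τ) := by
                  rw [← act_conv]
        _ = aconv (ρ.act (aconv σ τ h)) (aconv σ τ) := by
            rw [← aconv_sum_left]
            congr 1
            rw [aconv_apply r σ τ, map_sum]
  · -- inverses
    rintro σ ⟨hσ1, hσ2, hσ3, hσ4, hσ5, hσ6⟩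
    have hσ1' : aconv σ (convStar σ) = aone := hσ1
    have hσ2' : aconv (convStar σ) σ = aone := hσ2
    have hσ3' : ∀ b : B, aconv σ (ρ.act b) = aconv (ρ.act b) σ := fun b => hσ3 b
    have hσ6' : ∀ z : H, σ ∘ₗ LinearMap.mulLeft ℂ z = aconv (ρ.act (σ z)) σ :=
      fun z => hσ6 z
    have lazy3 : ∀ b : B, aconv (convStar σ) (ρ.act b) = aconv (ρ.act b) (convStar σ) := by
      intro b
      calc aconv (convStar σ) (ρ.act b)
          = aconv (convStar σ) (aconv (ρ.act b) (aconv σ (convStar σ))) := by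
            rw [hσ1', aconv_aone_right]
        _ = aconv (convStar σ) (aconv (aconv σ (ρ.act b)) (convStar σ)) := by
            rw [← aconv_assoc (ρ.act b) σ (convStar σ), ← hσ3' b]
        _ = aconv (aconv (aconv (convStar σ) σ) (ρ.act b)) (convStar σ) := by
            rw [← aconv_assoc, ← aconv_assoc]
        _ = aconv (ρ.act b) (convStar σ) := by rw [hσ2', aconv_aone_left]
    have lazy4 : ∀ m : M, convL S (convStar σ) (S.hact m) = convR S (S.hact m) (convStar σ) := by
      intro m
      calc convL S (convStar σ) (S.hact m)
          = convR S (convL S (convStar σ) (S.hact m)) convOne :=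
            (convR_one S _).symm
        _ = convR S (convL S (convStar σ) (S.hact m)) (conv σ (convStar σ)) := by rw [hσ1]
        _ = convR S (convR S (convL S (convStar σ) (S.hact m)) σ) (convStar σ) :=
            convR_conv S σ (convStar σ) _
        _ = convR S (convL S (convStar σ) (convR S (S.hact m) σ)) (convStar σ) := by
            rw [convL_convR]
        _ = convR S (convL S (convStar σ) (convL S σ (S.hact m))) (convStar σ) := by
            rw [← hσ4 m]
        _ = convR S (convL S (conv (convStar σ) σ) (S.hact m)) (convStar σ) := by
            rw [← convL_conv]
        _ = convR S (S.hact m) (convStar σ) := by rw [hσ2, convL_one]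
    have c5 : convStar σ 1 = 1 := by
      rw [convStar_apply, antipode_one, star_one, hσ5, star_one]
    have c6 : ∀ h : H, (convStar σ) ∘ₗ LinearMap.mulLeft ℂ h =
        aconv (ρ.act (convStar σ h)) (convStar σ) :=
      fun h => inv_cocycle σ (convStar σ) hσ1' hσ2' hσ6' lazy3 h
    refine ⟨convStar σ, ⟨?_, ?_, fun b => lazy3 b, lazy4, c5, fun h => c6 h⟩, hσ1, hσ2⟩
    · rw [convStar_convStar hH]; exact hσ2
    · rw [convStar_convStar hH]; exact hσ1
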